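/- Let n be a nonempty finite type and v : EuclideanSpace ℂ n a unit vector; define the pure state ω(X) = vᴴ X v on Matrix n n ℂ. Let S₁, S₂ be subsets of Matrix n n ℂ such that the ℂ-linear span of {X * Y : X ∈ S₁, Y ∈ S₂} is all of Matrix n n ℂ, and such that the identity matrix belongs to both S₁ and S₂. Suppose there are finitely many reals λ_k ≥ 0 with ∑_k λ_k = 1 and states Ω_k, ω_k¹, ω_k² on Matrix n n ℂ (linear functionals with Ω(1) = 1 and Ω(XᴴX) ≥ 0 for all X) satisfying Ω_k(X * Y) = ω_k¹(X) · ω_k²(Y) and ω(X * Y) = ∑_k λ_k · Ω_k(X * Y) for all X ∈ S₁, Y ∈ S₂. Then ω(X * Y) = ω(X) · ω(Y) for all X ∈ S₁ and Y ∈ S₂. -/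

import Mathlib

open scoped BigOperators ComplexOrder
open Matrix

/-- The pure state `X ↦ vᴴ X v` on the matrix algebra. -/
noncomputable def pureState {n : Type*} [Fintype n] (v : EuclideanSpace ℂ n)
    (X : Matrix n n ℂ) : ℂ :=
  ∑ i, ∑ j, starRingEnd ℂ (v i) * X i j * v j

noncomputable def wL {n : Type*} [Fintype n] (v : EuclideanSpace ℂ n) :
    Matrix n n ℂ →ₗ[ℂ] ℂ where
  toFun X := ∑ i, ∑ j, starRingEnd ℂ (v i) * X i j * v j
  map_add' X Y := by simp [mul_add, add_mul, Finset.sum_add_distrib]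
  map_smul' c X := by
    simp only [Matrix.smul_apply, smul_eq_mul, RingHom.id_apply, Finset.mul_sum]
    refine Finset.sum_congr rfl fun i _ => Finset.sum_congr rfl fun j _ => by ring

lemma wL_def {n : Type*} [Fintype n] (v : EuclideanSpace ℂ n) (X : Matrix n n ℂ) :
    wL v X = ∑ i, ∑ j, starRingEnd ℂ (v i) * X i j * v j := rfl

lemma wL_apply {n : Type*} [Fintype n] (v : EuclideanSpace ℂ n) (X : Matrix n n ℂ) :
    wL v X = star (v : n → ℂ) ⬝ᵥ (X *ᵥ (v : n → ℂ)) := by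
  simp [wL, dotProduct, mulVec, Finset.mul_sum, mul_assoc]

lemma hvv {n : Type*} [Fintype n] (v : EuclideanSpace ℂ n) (hv : ‖v‖ = 1) :
    star (v : n → ℂ) ⬝ᵥ (v : n → ℂ) = 1 := by
  have h : (inner ℂ v v : ℂ) = (1 : ℂ) := by
    rw [inner_self_eq_norm_sq_to_K, hv]; norm_num
  rw [← h, PiLp.inner_apply]
  simp [dotProduct, Complex.conj_mul']

lemma hPXP {n : Type*} [Fintype n] (v : EuclideanSpace ℂ n) (X : Matrix n n ℂ) :
    vecMulVec (v : n → ℂ) (star v) * X * vecMulVec (v : n → ℂ) (star v)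
      = wL v X • vecMulVec (v : n → ℂ) (star v) := by
  ext i j
  simp only [wL_def, Matrix.smul_apply, vecMulVec_apply, mul_apply, smul_eq_mul,
    Finset.sum_mul, Finset.mul_sum, Pi.star_apply, Complex.star_def]
  rw [Finset.sum_comm]
  refine Finset.sum_congr rfl fun a _ => Finset.sum_congr rfl fun b _ => by ring

lemma hPv {n : Type*} [Fintype n] (v : EuclideanSpace ℂ n) (hv : ‖v‖ = 1) :
    vecMulVec (v : n → ℂ) (star v) *ᵥ (v : n → ℂ) = (v : n → ℂ) := by
  funext i
  simp only [mulVec, dotProduct, vecMulVec_apply, Pi.star_apply]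
  have := hvv v hv
  simp only [dotProduct, Pi.star_apply] at this
  calc ∑ j, v i * star (v j) * v j = v i * ∑ j, star (v j) * v j := by
        rw [Finset.mul_sum]; exact Finset.sum_congr rfl fun j _ => by ring
    _ = v i := by rw [this, mul_one]

lemma purity {n : Type*} [Fintype n] [DecidableEq n] (v : EuclideanSpace ℂ n)
    (hv : ‖v‖ = 1) (φ : Matrix n n ℂ →ₗ[ℂ] ℂ) (hone : φ 1 = 1)
    (hpos : ∀ X : Matrix n n ℂ, 0 ≤ φ (Xᴴ * X))
    (hherm : ∀ X : Matrix n n ℂ, φ Xᴴ = starRingEnd ℂ (φ X))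
    (k1 : ∀ X : Matrix n n ℂ, X *ᵥ (v : n → ℂ) = 0 → φ X = 0)
    (X : Matrix n n ℂ) : φ X = wL v X := by
  set P : Matrix n n ℂ := vecMulVec (v : n → ℂ) (star v) with hP
  have hPH : Pᴴ = P := by
    ext i j
    simp [hP, conjTranspose_apply, vecMulVec_apply, mul_comm]
  have h1Pv : (1 - P) *ᵥ (v : n → ℂ) = 0 := by
    rw [sub_mulVec, one_mulVec, hPv v hv, sub_self]
  have decomp : X = P * X * P + P * X * (1 - P) + (1 - P) * X := by
    noncomm_ring
  have t2 : φ (P * X * (1 - P)) = 0 := by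
    apply k1
    rw [← mulVec_mulVec, h1Pv, mulVec_zero]
  have t3 : φ ((1 - P) * X) = 0 := by
    have hY : φ (Xᴴ * (1 - P)) = 0 := by
      apply k1
      rw [← mulVec_mulVec, h1Pv, mulVec_zero]
    have : (1 - P) * X = (Xᴴ * (1 - P))ᴴ := by
      rw [conjTranspose_mul, conjTranspose_conjTranspose, conjTranspose_sub,
        conjTranspose_one, hPH]
    rw [this, hherm, hY, map_zero]
  have hφP : φ P = 1 := by
    have hd1 : (1 : Matrix n n ℂ) = P + (1 - P) := by abel
    have t1 : φ (1 - P) = 0 := k1 _ h1Pv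
    calc φ P = φ P + φ (1 - P) := by rw [t1, add_zero]
      _ = φ 1 := by rw [← map_add]; congr 1; abel
      _ = 1 := hone
  calc φ X = φ (P * X * P) + φ (P * X * (1 - P)) + φ ((1 - P) * X) := by
        rw [← map_add, ← map_add, ← decomp]
    _ = φ (P * X * P) := by rw [t2, t3, add_zero, add_zero]
    _ = wL v X * φ P := by rw [hPXP, LinearMap.map_smul, smul_eq_mul]
    _ = wL v X := by rw [hφP, mul_one]

lemma herm {n : Type*} [Fintype n] [DecidableEq n] (φ : Matrix n n ℂ →ₗ[ℂ] ℂ)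
    (hpos : ∀ X : Matrix n n ℂ, 0 ≤ φ (Xᴴ * X)) (X : Matrix n n ℂ) :
    φ Xᴴ = starRingEnd ℂ (φ X) := by
  have him : ∀ Y : Matrix n n ℂ, (φ (Yᴴ * Y)).im = 0 := fun Y =>
    ((Complex.le_def.mp (hpos Y)).2).symm
  have h1 := him (1 + X)
  have h2 := him (1 + Complex.I • X)
  have e1 : (1 + X)ᴴ * (1 + X) = 1 + X + Xᴴ + Xᴴ * X := by
    simp only [conjTranspose_add, conjTranspose_one, mul_add, add_mul, one_mul, mul_one]
    abel
  have e2 : (1 + Complex.I • X)ᴴ * (1 + Complex.I • X)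
      = 1 + Complex.I • X - Complex.I • Xᴴ + Xᴴ * X := by
    have : (Complex.I • X)ᴴ = (-Complex.I) • Xᴴ := by
      simp [conjTranspose_smul, Complex.conj_I]
    rw [conjTranspose_add, conjTranspose_one, this]
    simp only [add_mul, mul_add, one_mul, mul_one, smul_mul_assoc, mul_smul_comm,
      smul_add, smul_smul]
    rw [show Complex.I * -Complex.I = 1 by simp]
    rw [one_smul, neg_smul]
    abel
  rw [e1] at h1
  rw [e2] at h2
  simp only [map_add, map_sub, LinearMap.map_smul, smul_eq_mul] at h1 h2
  have hone : (φ 1).im = 0 := by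
    have := him 1; simpa using this
  have hXX : (φ (Xᴴ * X)).im = 0 := him X
  simp only [Complex.add_im, Complex.sub_im, Complex.mul_im, Complex.I_re, Complex.I_im,
    hone, hXX] at h1 h2
  apply Complex.ext
  · simp only [Complex.conj_re]; linarith
  · simp only [Complex.conj_im]; linarith

lemma cs0 {n : Type*} [Fintype n] [DecidableEq n] (φ : Matrix n n ℂ →ₗ[ℂ] ℂ)
    (hone : φ 1 = 1) (hpos : ∀ X : Matrix n n ℂ, 0 ≤ φ (Xᴴ * X))
    (X : Matrix n n ℂ) (hX : φ (Xᴴ * X) = 0) : φ X = 0 := by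
  set t : ℂ := φ X with ht
  have key := hpos ((-t) • 1 + X)
  have e : ((-t) • 1 + X)ᴴ * ((-t) • 1 + X)
      = (starRingEnd ℂ t * t) • 1 + (-(starRingEnd ℂ t)) • X + (-t) • Xᴴ + Xᴴ * X := by
    rw [conjTranspose_add, conjTranspose_smul, conjTranspose_one]
    simp only [star_neg, Complex.star_def, smul_add, add_mul, mul_add, smul_mul_assoc,
      mul_smul_comm, one_mul, mul_one, smul_smul, neg_smul, neg_neg, neg_mul, mul_neg]
    simp only [smul_neg, smul_smul, neg_add, neg_neg]
    rw [mul_comm t (starRingEnd ℂ t)]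
    abel
  rw [e] at key
  simp only [map_add, LinearMap.map_smul, hone, hX, smul_eq_mul, mul_one, add_zero] at key
  rw [herm φ hpos X, ← ht] at key
  have : starRingEnd ℂ t * t + -starRingEnd ℂ t * t + -t * starRingEnd ℂ t
      = -(starRingEnd ℂ t * t) := by ring
  rw [this] at key
  have h2 : starRingEnd ℂ t * t = Complex.normSq t := by
    rw [mul_comm, Complex.mul_conj]
  rw [h2] at key
  have := (Complex.le_def.mp key).1
  simp only [Complex.zero_re, Complex.neg_re, Complex.ofReal_re] at this
  have h3 : Complex.normSq t = 0 := le_antisymm (by linarith) (Complex.normSq_nonneg t)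
  exact Complex.normSq_eq_zero.mp h3

/-- paper's Lemma 2: if a pure state admits a separable decomposition
with respect to subsets `S₁`, `S₂` whose products span the whole matrix algebra,
then its expectation factorizes on all local operators. -/
theorem pure_separable_state_factorizes
    {n : Type*} [Fintype n] [DecidableEq n] [Nonempty n]
    (v : EuclideanSpace ℂ n) (hv : ‖v‖ = 1)
    (S₁ S₂ : Set (Matrix n n ℂ))
    (hspan : Submodule.span ℂ {Z : Matrix n n ℂ | ∃ X ∈ S₁, ∃ Y ∈ S₂, Z = X * Y} = ⊤)
    (h₁ : (1 : Matrix n n ℂ) ∈ S₁) (h₂ : (1 : Matrix n n ℂ) ∈ S₂)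
    (K : Type*) [Fintype K] (lam : K → ℝ)
    (hlam : ∀ k, 0 ≤ lam k) (hlamsum : ∑ k, lam k = 1)
    (Ω ω₁ ω₂ : K → (Matrix n n ℂ →ₗ[ℂ] ℂ))
    (hΩstate : ∀ k, Ω k 1 = 1 ∧ ∀ X : Matrix n n ℂ, 0 ≤ Ω k (Xᴴ * X))
    (hω₁state : ∀ k, ω₁ k 1 = 1 ∧ ∀ X : Matrix n n ℂ, 0 ≤ ω₁ k (Xᴴ * X))
    (hω₂state : ∀ k, ω₂ k 1 = 1 ∧ ∀ X : Matrix n n ℂ, 0 ≤ ω₂ k (Xᴴ * X))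
    (hfact : ∀ k, ∀ X ∈ S₁, ∀ Y ∈ S₂, Ω k (X * Y) = ω₁ k X * ω₂ k Y)
    (hdecomp : ∀ X ∈ S₁, ∀ Y ∈ S₂,
      pureState v (X * Y) = ∑ k, (lam k : ℂ) * Ω k (X * Y)) :
    ∀ X ∈ S₁, ∀ Y ∈ S₂, pureState v (X * Y) = pureState v X * pureState v Y := by
  have hps : ∀ X : Matrix n n ℂ, pureState v X = wL v X := fun X => rfl
  -- ωL equals the convex combination, as linear maps
  set g : Matrix n n ℂ →ₗ[ℂ] ℂ := ∑ k, (lam k : ℂ) • Ω k with hg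
  have hwg : wL v = g := by
    apply LinearMap.ext_on hspan
    rintro Z ⟨X, hX, Y, hY, rfl⟩
    rw [← hps, hdecomp X hX Y hY, hg]
    simp [LinearMap.sum_apply]
  -- pick k₀ with positive weight
  obtain ⟨k₀, hk₀⟩ : ∃ k, lam k ≠ 0 := by
    by_contra h
    push_neg at h
    simp [h] at hlamsum
  have hk₀pos : (0 : ℝ) < lam k₀ := lt_of_le_of_ne (hlam k₀) (Ne.symm hk₀)
  set φ := Ω k₀ with hφ
  have hφone : φ 1 = 1 := (hΩstate k₀).1
  have hφpos : ∀ X : Matrix n n ℂ, 0 ≤ φ (Xᴴ * X) := (hΩstate k₀).2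
  -- kernel property
  have hker : ∀ X : Matrix n n ℂ, X *ᵥ (v : n → ℂ) = 0 → φ (Xᴴ * X) = 0 := by
    intro X hX
    have hw0 : wL v (Xᴴ * X) = 0 := by
      rw [wL_apply, ← mulVec_mulVec, hX, mulVec_zero, dotProduct_zero]
    have hsum : ∑ k, (lam k : ℂ) * Ω k (Xᴴ * X) = 0 := by
      have h := LinearMap.congr_fun hwg (Xᴴ * X)
      simp only [hg, LinearMap.sum_apply, LinearMap.smul_apply, smul_eq_mul] at h
      rw [← h]
      exact hw0
    have hterm : ∀ k ∈ Finset.univ, (0:ℂ) ≤ (lam k : ℂ) * Ω k (Xᴴ * X) := fun k _ =>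
      mul_nonneg (by exact_mod_cast hlam k) ((hΩstate k).2 X)
    have hle : (lam k₀ : ℂ) * Ω k₀ (Xᴴ * X) ≤ ∑ k, (lam k : ℂ) * Ω k (Xᴴ * X) :=
      Finset.single_le_sum hterm (Finset.mem_univ k₀)
    rw [hsum] at hle
    have heq : (lam k₀ : ℂ) * Ω k₀ (Xᴴ * X) = 0 :=
      le_antisymm hle (hterm k₀ (Finset.mem_univ k₀))
    rcases mul_eq_zero.mp heq with h | h
    · exact absurd (by exact_mod_cast h) hk₀
    · exact h
  have k1 : ∀ X : Matrix n n ℂ, X *ᵥ (v : n → ℂ) = 0 → φ X = 0 := fun X hX =>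
    cs0 φ hφone hφpos X (hker X hX)
  have hφeq : ∀ X, φ X = wL v X :=
    purity v hv φ hφone hφpos (herm φ hφpos) k1
  intro X hX Y hY
  have e1 : pureState v (X * Y) = ω₁ k₀ X * ω₂ k₀ Y := by
    rw [hps, ← hφeq, hφ, hfact k₀ X hX Y hY]
  have e2 : pureState v X = ω₁ k₀ X := by
    have h := hfact k₀ X hX 1 h₂
    rw [mul_one, (hω₂state k₀).1, mul_one] at h
    rw [hps, ← hφeq, hφ, h]
  have e3 : pureState v Y = ω₂ k₀ Y := by
    have h := hfact k₀ 1 h₁ Y hY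
    rw [one_mul, (hω₁state k₀).1, one_mul] at h
    rw [hps, ← hφeq, hφ, h]
  rw [e1, e2, e3]
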